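/- If the n-sphere S^n is an absolute extensor for a metric space X, then every finite open cover of X has a finite open refinement of order at most n (i.e., the covering dimension of X is at most n). -/

import Mathlib

open Set

noncomputable def lam (n : ℕ) (i : Fin (n+2)) (y : EuclideanSpace ℝ (Fin (n+1))) : ℝ :=
  Fin.lastCases (-(∑ k, y k)) (fun j => y j) i

lemma lam_castSucc (n : ℕ) (j : Fin (n+1)) (y : EuclideanSpace ℝ (Fin (n+1))) :
    lam n j.castSucc y = y j := by simp [lam]

lemma lam_last (n : ℕ) (y : EuclideanSpace ℝ (Fin (n+1))) :
    lam n (Fin.last (n+1)) y = -(∑ k, y k) := by simp [lam]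

lemma lam_cont (n : ℕ) (i : Fin (n+2)) : Continuous (lam n i) := by
  induction i using Fin.lastCases with
  | last =>
    have : lam n (Fin.last (n+1)) = fun y => -(∑ k, y k) := funext fun y => lam_last n y
    rw [this]
    exact (continuous_finset_sum _ fun k _ => (EuclideanSpace.proj k).continuous).neg
  | cast j =>
    have : lam n (Fin.castSucc j) = fun y => y j := funext fun y => lam_castSucc n j y
    rw [this]
    exact (EuclideanSpace.proj j).continuous

lemma lam_smul (n : ℕ) (i : Fin (n+2)) (c : ℝ) (y : EuclideanSpace ℝ (Fin (n+1))) :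
    lam n i (c • y) = c * lam n i y := by
  induction i using Fin.lastCases with
  | last => simp [lam_last, Finset.mul_sum, mul_comm]
  | cast j => simp [lam_castSucc]

lemma sum_lam (n : ℕ) (y : EuclideanSpace ℝ (Fin (n+1))) : ∑ i, lam n i y = 0 := by
  rw [Fin.sum_univ_castSucc]
  simp [lam_castSucc, lam_last]

lemma eq_zero_of_lam_nonpos (n : ℕ) (y : EuclideanSpace ℝ (Fin (n+1)))
    (h : ∀ i, lam n i y ≤ 0) : y = 0 := by
  have hz : ∀ i, lam n i y = 0 := by
    have := (Finset.sum_eq_zero_iff_of_nonpos (fun i _ => h i)).1 (sum_lam n y)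
    exact fun i => this i (Finset.mem_univ i)
  ext k
  have := hz k.castSucc
  rw [lam_castSucc] at this; simpa using this

lemma exists_lam_pos (n : ℕ) (y : EuclideanSpace ℝ (Fin (n+1))) (hy : y ≠ 0) :
    ∃ i, 0 < lam n i y := by
  by_contra h
  push_neg at h
  exact hy (eq_zero_of_lam_nonpos n y h)

lemma key_shrink {X : Type*} [MetricSpace X] (n : ℕ)
    (hAE : ∀ P : Set X, IsClosed P →
      ∀ f : X → Metric.sphere (0 : EuclideanSpace ℝ (Fin (n + 1))) 1,
        ContinuousOn f P →
          ∃ g : X → Metric.sphere (0 : EuclideanSpace ℝ (Fin (n + 1))) 1,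
            Continuous g ∧ Set.EqOn g f P)
    (U : Fin (n+2) → Set X) (hUo : ∀ i, IsOpen (U i)) (hUc : ⋃ i, U i = univ) :
    ∃ V : Fin (n+2) → Set X, (∀ i, IsOpen (V i)) ∧ (∀ i, V i ⊆ U i) ∧
      (⋃ i, V i) = univ ∧ (⋂ i, V i) = ∅ := by
  classical
  obtain ⟨φ, hφ⟩ := PartitionOfUnity.exists_isSubordinate (s := univ) isClosed_univ U hUo
    (by rw [hUc])
  have hsum : ∀ x : X, ∑ i, φ i x = 1 := by
    intro x
    have := φ.sum_eq_one (mem_univ x)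
    rwa [finsum_eq_sum_of_fintype] at this
  have hφU : ∀ i (x : X), 0 < φ i x → x ∈ U i := fun i x hx =>
    hφ i (subset_tsupport _ (by simpa using hx.ne'))
  set m : ℝ := ((n : ℝ) + 2)⁻¹ with hm
  have hmpos : 0 < m := by positivity
  set F : X → EuclideanSpace ℝ (Fin (n+1)) :=
    fun x => WithLp.toLp 2 (fun k : Fin (n+1) => φ k.castSucc x - m) with hF
  have hFcont : Continuous F := by
    refine (PiLp.continuous_toLp 2 _).comp (continuous_pi fun k => ?_)
    exact ((φ k.castSucc).continuous).sub continuous_const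
  have hkey : ∀ (x : X) (i : Fin (n+2)), lam n i (F x) = φ i x - m := by
    intro x i
    induction i using Fin.lastCases with
    | last =>
      rw [lam_last]
      have h1 : ∑ k : Fin (n+1), F x k = (∑ k : Fin (n+1), φ k.castSucc x) - (n+1) * m := by
        simp [hF, Finset.sum_sub_distrib, mul_comm]
      have h2 : (∑ k : Fin (n+1), φ k.castSucc x) = 1 - φ (Fin.last (n+1)) x := by
        have := hsum x
        rw [Fin.sum_univ_castSucc] at this
        linarith
      have h3 : ((n : ℝ) + 1) * m = 1 - m := by
        rw [hm]
        field_simp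
        ring
      rw [h1, h2, h3]
      ring
    | cast j =>
      exact lam_castSucc n j (F x)
  set P : Set X := {x | ∃ i, φ i x = 0} with hP
  have hPc : IsClosed P := by
    have : P = ⋃ i, (φ i) ⁻¹' {0} := by
      ext x; simp [hP]
    rw [this]
    exact isClosed_iUnion_of_finite fun i => isClosed_singleton.preimage (φ i).continuous
  have hF0 : ∀ x ∈ P, F x ≠ 0 := by
    rintro x ⟨i, hi⟩ hc
    have := hkey x i
    rw [hc, hi] at this
    have h0 : lam n i 0 = 0 := by
      have := lam_smul n i 0 0
      simpa using this
    rw [h0] at this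
    exact hmpos.ne (by linarith)
  have hpt : EuclideanSpace.single (0 : Fin (n+1)) (1:ℝ) ∈
      Metric.sphere (0 : EuclideanSpace ℝ (Fin (n + 1))) 1 := by
    simp [mem_sphere_iff_norm, EuclideanSpace.norm_single]
  set f₀ : X → Metric.sphere (0 : EuclideanSpace ℝ (Fin (n + 1))) 1 :=
    fun x => if hx : F x = 0 then ⟨_, hpt⟩ else
      ⟨‖F x‖⁻¹ • F x, by
        rw [mem_sphere_iff_norm, sub_zero, norm_smul, norm_inv, norm_norm]
        exact inv_mul_cancel₀ (norm_ne_zero_iff.2 hx)⟩ with hf₀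
  have hf₀P : ∀ x ∈ P, (f₀ x : EuclideanSpace ℝ (Fin (n+1))) = ‖F x‖⁻¹ • F x := by
    intro x hx
    rw [hf₀]
    simp [dif_neg (hF0 x hx)]
  have hf₀cont : ContinuousOn f₀ P := by
    rw [Topology.IsInducing.subtypeVal.continuousOn_iff]
    have hcw : ContinuousOn (fun y => ‖F y‖⁻¹ • F y) P :=
      ContinuousOn.smul
        ((hFcont.norm.continuousOn).inv₀ fun y hy => norm_ne_zero_iff.2 (hF0 y hy))
        hFcont.continuousOn
    exact hcw.congr fun y hy => hf₀P y hy
  obtain ⟨g, hgc, hgf⟩ := hAE P hPc f₀ hf₀cont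
  have hgne : ∀ x : X, (g x : EuclideanSpace ℝ (Fin (n+1))) ≠ 0 := by
    intro x
    have := (g x).2
    rw [mem_sphere_iff_norm, sub_zero] at this
    intro hc
    rw [hc] at this
    simp at this
  refine ⟨fun i => (fun x => lam n i (g x)) ⁻¹' Ioi 0, fun i => ?_, fun i => ?_, ?_, ?_⟩
  · exact isOpen_Ioi.preimage ((lam_cont n i).comp (continuous_subtype_val.comp hgc))
  · intro x hx
    simp only [mem_preimage, mem_Ioi] at hx
    by_cases hxP : x ∈ P
    · have hgx : (g x : EuclideanSpace ℝ (Fin (n+1))) = ‖F x‖⁻¹ • F x := by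
        rw [hgf hxP]; exact hf₀P x hxP
      rw [hgx, lam_smul] at hx
      have hnorm : 0 < ‖F x‖⁻¹ := by
        rw [inv_pos]; exact norm_pos_iff.2 (hF0 x hxP)
      have hlam : 0 < lam n i (F x) := by
        by_contra hc
        push_neg at hc
        exact absurd hx (not_lt.2 (mul_nonpos_iff.2 (Or.inl ⟨hnorm.le, hc⟩)))
      have := hkey x i
      exact hφU i x (by linarith [hmpos])
    · have : φ i x ≠ 0 := fun hc => hxP ⟨i, hc⟩
      exact hφU i x (lt_of_le_of_ne (φ.nonneg i x) (Ne.symm this))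
  · refine eq_univ_iff_forall.2 fun x => ?_
    obtain ⟨i, hi⟩ := exists_lam_pos n (g x) (hgne x)
    exact mem_iUnion.2 ⟨i, hi⟩
  · refine eq_empty_iff_forall_notMem.2 fun x hx => ?_
    simp only [mem_iInter, mem_preimage, mem_Ioi] at hx
    have hpos : 0 < ∑ i, lam n i (g x) :=
      Finset.sum_pos (fun i _ => hx i) Finset.univ_nonempty
    rw [sum_lam] at hpos
    exact lt_irrefl _ hpos


/-- If the `n`-sphere is an absolute extensor for a metric space `X`, then the
covering dimension of `X` is at most `n`. -/
theorem stmt_10 {X : Type*} [MetricSpace X] (n : ℕ)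
    (hAE : ∀ P : Set X, IsClosed P →
      ∀ f : X → Metric.sphere (0 : EuclideanSpace ℝ (Fin (n + 1))) 1,
        ContinuousOn f P →
          ∃ g : X → Metric.sphere (0 : EuclideanSpace ℝ (Fin (n + 1))) 1,
            Continuous g ∧ Set.EqOn g f P)
    (𝒰 : Finset (Set X)) (h𝒰o : ∀ U ∈ 𝒰, IsOpen U)
    (h𝒰c : ⋃₀ (𝒰 : Set (Set X)) = Set.univ) :
    ∃ 𝒱 : Finset (Set X),
      (∀ V ∈ 𝒱, IsOpen V) ∧ ⋃₀ (𝒱 : Set (Set X)) = Set.univ ∧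
      (∀ V ∈ 𝒱, ∃ U ∈ 𝒰, V ⊆ U) ∧
      ∀ 𝒲 ⊆ 𝒱, n + 2 ≤ 𝒲.card → ⋂₀ (𝒲 : Set (Set X)) = ∅ := by
  classical
  set ι := {U : Set X // U ∈ 𝒰} with hι
  have hU : (⋃ i : ι, (i : Set X)) = univ := by
    refine eq_univ_iff_forall.2 fun x => ?_
    have : x ∈ ⋃₀ (𝒰 : Set (Set X)) := h𝒰c ▸ mem_univ x
    obtain ⟨U, hUm, hx⟩ := this
    exact mem_iUnion.2 ⟨⟨U, hUm⟩, hx⟩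
  have main : ∀ S : Finset (Finset ι), (∀ A ∈ S, A.card = n+2) →
      ∃ V : ι → Set X, (∀ i, IsOpen (V i)) ∧ (∀ i, V i ⊆ (i : Set X)) ∧
        (⋃ i, V i) = univ ∧ ∀ A ∈ S, (⋂ i ∈ A, V i) = ∅ := by
    intro S
    induction S using Finset.induction_on with
    | empty =>
      intro _
      exact ⟨fun i => (i : Set X), fun i => h𝒰o i.1 i.2, fun i => subset_rfl, hU, by simp⟩
    | @insert A S' hAS ih =>
      intro hcards
      obtain ⟨V, hVo, hVsub, hVc, hVint⟩ := ih fun B hB => hcards B (Finset.mem_insert_of_mem hB)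
      have hAcard : A.card = n + 2 := hcards A (Finset.mem_insert_self A S')
      set e : {i // i ∈ A} ≃ Fin (n+2) := A.equivFin.trans (finCongr hAcard) with he
      set a : Fin (n+2) → ι := fun j => (e.symm j : ι) with ha
      have haA : ∀ j, a j ∈ A := fun j => (e.symm j).2
      have hae : ∀ j (h : a j ∈ A), e ⟨a j, h⟩ = j := by
        intro j h
        have : (⟨a j, h⟩ : {i // i ∈ A}) = e.symm j := Subtype.ext rfl
        rw [this]
        exact e.apply_symm_apply j
      set W : Set X := ⋃ (i : ι) (_ : i ∉ A), V i with hW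
      set G : Fin (n+2) → Set X :=
        fun j => if j = Fin.last (n+1) then V (a j) ∪ W else V (a j) with hG
      have hGdef : ∀ j, G j = if j = Fin.last (n+1) then V (a j) ∪ W else V (a j) :=
        fun j => rfl
      have hGsup : ∀ j, V (a j) ⊆ G j := by
        intro j
        rw [hGdef]
        split
        · exact subset_union_left
        · exact subset_rfl
      have hGo : ∀ j, IsOpen (G j) := by
        intro j
        rw [hGdef]
        split
        · exact (hVo _).union (isOpen_iUnion fun i => isOpen_iUnion fun _ => hVo i)
        · exact hVo _
      have hGc : (⋃ j, G j) = univ := by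
        refine eq_univ_iff_forall.2 fun x => ?_
        have : x ∈ ⋃ i, V i := hVc ▸ mem_univ x
        obtain ⟨i, hi⟩ := mem_iUnion.1 this
        by_cases hiA : i ∈ A
        · refine mem_iUnion.2 ⟨e ⟨i, hiA⟩, hGsup _ ?_⟩
          have : a (e ⟨i, hiA⟩) = i := by
            show ((e.symm (e ⟨i, hiA⟩)) : ι) = i
            rw [Equiv.symm_apply_apply]
          rw [this]; exact hi
        · refine mem_iUnion.2 ⟨Fin.last (n+1), ?_⟩
          have hx : x ∈ W := mem_iUnion.2 ⟨i, mem_iUnion.2 ⟨hiA, hi⟩⟩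
          rw [hGdef]
          simp only [if_pos rfl]
          exact Or.inr hx
      obtain ⟨V', hV'o, hV'sub, hV'c, hV'int⟩ := key_shrink n hAE G hGo hGc
      set V'' : ι → Set X := fun i => if h : i ∈ A then V' (e ⟨i, h⟩) ∩ V i else V i with hV''
      have hV''def : ∀ i, V'' i = if h : i ∈ A then V' (e ⟨i, h⟩) ∩ V i else V i :=
        fun i => rfl
      have hV''subV : ∀ i, V'' i ⊆ V i := by
        intro i
        rw [hV''def]
        split
        · exact inter_subset_right
        · exact subset_rfl
      refine ⟨V'', fun i => ?_, fun i => (hV''subV i).trans (hVsub i), ?_, ?_⟩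
      · rw [hV''def]
        split
        · exact (hV'o _).inter (hVo i)
        · exact hVo i
      · refine eq_univ_iff_forall.2 fun x => ?_
        have : x ∈ ⋃ j, V' j := hV'c ▸ mem_univ x
        obtain ⟨j, hj⟩ := mem_iUnion.1 this
        have hGj : x ∈ G j := hV'sub j hj
        by_cases hlast : j = Fin.last (n+1)
        · rw [hGdef] at hGj
          simp only [if_pos hlast] at hGj
          rcases hGj with hGj | hGj
          · refine mem_iUnion.2 ⟨a j, ?_⟩
            rw [hV''def, dif_pos (haA j), hae j (haA j)]
            exact ⟨hj, hGj⟩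
          · obtain ⟨i, hi⟩ := mem_iUnion.1 hGj
            obtain ⟨hiA, hxi⟩ := mem_iUnion.1 hi
            exact mem_iUnion.2 ⟨i, by rw [hV''def, dif_neg hiA]; exact hxi⟩
        · rw [hGdef] at hGj
          simp only [if_neg hlast] at hGj
          refine mem_iUnion.2 ⟨a j, ?_⟩
          rw [hV''def, dif_pos (haA j), hae j (haA j)]
          exact ⟨hj, hGj⟩
      · intro B hB
        rcases Finset.mem_insert.1 hB with hBA | hBS
        · subst hBA
          refine eq_empty_iff_forall_notMem.2 fun x hx => ?_
          have hx' : ∀ j, x ∈ V' j := by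
            intro j
            have := mem_iInter₂.1 hx (a j) (haA j)
            rw [hV''def, dif_pos (haA j), hae j (haA j)] at this
            exact this.1
          have : x ∈ ⋂ j, V' j := mem_iInter.2 hx'
          rw [hV'int] at this
          exact this
        · have := hVint B hBS
          refine eq_empty_iff_forall_notMem.2 fun x hx => ?_
          have hx' : x ∈ ⋂ i ∈ B, V i :=
            mem_iInter₂.2 fun i hi => hV''subV i (mem_iInter₂.1 hx i hi)
          rw [this] at hx'
          exact hx'
  obtain ⟨V, hVo, hVsub, hVc, hVint⟩ :=
    main (Finset.univ.powersetCard (n+2))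
      (fun A hA => (Finset.mem_powersetCard.1 hA).2)
  refine ⟨Finset.image V Finset.univ, ?_, ?_, ?_, ?_⟩
  · intro w hw
    obtain ⟨i, _, rfl⟩ := Finset.mem_image.1 hw
    exact hVo i
  · refine eq_univ_iff_forall.2 fun x => ?_
    have : x ∈ ⋃ i, V i := hVc ▸ mem_univ x
    obtain ⟨i, hi⟩ := mem_iUnion.1 this
    exact ⟨V i, by simp [Finset.mem_image], hi⟩
  · intro w hw
    obtain ⟨i, _, rfl⟩ := Finset.mem_image.1 hw
    exact ⟨i.1, i.2, hVsub i⟩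
  · intro 𝒲 h𝒲 hcard
    have hex : ∀ w : Set X, w ∈ 𝒲 → ∃ i : ι, V i = w := by
      intro w hw
      obtain ⟨i, _, hi⟩ := Finset.mem_image.1 (h𝒲 hw)
      exact ⟨i, hi⟩
    set T : Finset ι := 𝒲.attach.image (fun w => (hex w.1 w.2).choose) with hT
    have hTcard : 𝒲.card ≤ T.card := by
      rw [hT, Finset.card_image_of_injOn, Finset.card_attach]
      intro w _ w' _ hww
      apply Subtype.ext
      rw [← (hex w.1 w.2).choose_spec, ← (hex w'.1 w'.2).choose_spec]
      exact congrArg V hww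
    obtain ⟨B, hBT, hBcard⟩ := Finset.exists_subset_card_eq (le_trans hcard hTcard)
    have hBmem : B ∈ Finset.univ.powersetCard (n+2) :=
      Finset.mem_powersetCard.2 ⟨Finset.subset_univ _, hBcard⟩
    have hempty := hVint B hBmem
    refine eq_empty_iff_forall_notMem.2 fun x hx => ?_
    have hxB : x ∈ ⋂ i ∈ B, V i := by
      refine mem_iInter₂.2 fun i hi => ?_
      obtain ⟨w, hwmem, hwi⟩ := Finset.mem_image.1 (hBT hi)
      have := (hex w.1 w.2).choose_spec
      rw [hwi] at this
      rw [this]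
      exact hx w.1 w.2
    rw [hempty] at hxB
    exact hxB
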